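/- Let b be an s-t bridge of G and let e be any other s-t bridge of G. Then in G with b removed, e's endpoints satisfy exactly one of: the tail of e is reachable from s, or t is reachable from the head of e. In particular, e is either 'before' b (head of e reaches s-side) or 'after' b, but not both. -/

import Mathlib

variable {V : Type*}

/-- Reachability via directed edges of relation `E`. -/
def reaches (E : V → V → Prop) : V → V → Prop := Relation.ReflTransGen E

/-- The graph with the single edge `e` deleted. -/
def eraseEdge (E : V → V → Prop) (e : V × V) : V → V → Prop :=
  fun a b => E a b ∧ (a, b) ≠ e

/-- `e` is an `s`-`t` bridge: it is an edge and its removal destroys all `s`-`t` paths. -/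
def IsBridge (E : V → V → Prop) (s t : V) (e : V × V) : Prop :=
  E e.1 e.2 ∧ ¬ reaches (eraseEdge E e) s t

/-- A directed walk from `s` to `t` whose successive vertices after `s` are `p`. -/
def IsWalk (E : V → V → Prop) (s t : V) (p : List V) : Prop :=
  List.Chain E s p ∧ (s :: p).getLast (List.cons_ne_nil s p) = t

/-- The list of edges of the walk `s :: p`. -/
def edgesOf (s : V) (p : List V) : List (V × V) := (s :: p).zip p

/-- for distinct bridges b, e, in G \ b exactly one of
 and  holds. -/
lemma lemA {E : V → V → Prop} {x : V × V} {u v : V}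
    (h : Relation.ReflTransGen E u v)
    (hn : ¬ Relation.ReflTransGen (eraseEdge E x) u v) :
    Relation.ReflTransGen (eraseEdge E x) u x.1 := by
  induction h using Relation.ReflTransGen.head_induction_on with
  | refl => exact absurd Relation.ReflTransGen.refl hn
  | @head a c hab hbc ih =>
    by_cases hx : (a, c) = x
    · subst hx; exact Relation.ReflTransGen.refl
    · have hn' : ¬ Relation.ReflTransGen (eraseEdge E x) c v :=
        fun hc => hn (hc.head ⟨hab, hx⟩)
      exact (ih hn').head ⟨hab, hx⟩

lemma lemB {E : V → V → Prop} {x : V × V} {u v : V}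
    (h : Relation.ReflTransGen E u v)
    (hn : ¬ Relation.ReflTransGen (eraseEdge E x) u v) :
    Relation.ReflTransGen (eraseEdge E x) x.2 v := by
  induction h with
  | refl => exact absurd Relation.ReflTransGen.refl hn
  | @tail c d hh hcd ih =>
    by_cases hx : (c, d) = x
    · subst hx; exact Relation.ReflTransGen.refl
    · have hn' : ¬ Relation.ReflTransGen (eraseEdge E x) u c :=
        fun hc => hn (hc.tail ⟨hcd, hx⟩)
      exact (ih hn').tail ⟨hcd, hx⟩

lemma walk_reaches {E : V → V → Prop} {s t : V} {p : List V} (h : IsWalk E s t p) :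
    Relation.ReflTransGen E s t := by
  obtain ⟨hc, hl⟩ := h
  induction p generalizing s with
  | nil => simp at hl; subst hl; exact Relation.ReflTransGen.refl
  | cons a q ih =>
    replace hc := List.chain_cons.mp hc
    refine Relation.ReflTransGen.head hc.1 (ih hc.2 ?_)
    rw [← hl, List.getLast_cons (List.cons_ne_nil a q)]

theorem stmt1 (E : V → V → Prop) (s t : V) (b e : V × V)
    (hpath : ∃ p : List V, IsWalk E s t p)
    (hb : IsBridge E s t b) (he : IsBridge E s t e) (hne : e ≠ b) :
    Xor' (reaches (eraseEdge E b) s e.1) (reaches (eraseEdge E b) e.2 t) := by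
  obtain ⟨p, hp⟩ := hpath
  have hst : Relation.ReflTransGen E s t := walk_reaches hp
  obtain ⟨hbE, hbN⟩ := hb
  obtain ⟨heE, heN⟩ := he
  have hneb : ((e.1, e.2) : V × V) ≠ b := by rwa [Prod.mk.eta]
  have hnbe : ((b.1, b.2) : V × V) ≠ e := by rw [Prod.mk.eta]; exact fun h => hne h.symm
  have hnot : ¬ (reaches (eraseEdge E b) s e.1 ∧ reaches (eraseEdge E b) e.2 t) := by
    rintro ⟨h1, h2⟩
    exact hbN (h1.trans ((Relation.ReflTransGen.single ⟨heE, hneb⟩).trans h2))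
  by_cases h1 : reaches (eraseEdge E b) s e.1
  · exact Or.inl ⟨h1, fun h2 => hnot ⟨h1, h2⟩⟩
  · refine Or.inr ⟨?_, h1⟩
    by_contra h2
    have ha : Relation.ReflTransGen (eraseEdge E b) s b.1 := lemA hst hbN
    have hb2 : Relation.ReflTransGen (eraseEdge E b) b.2 t := lemB hst hbN
    have hmono : ∀ a c, eraseEdge (eraseEdge E b) e a c → eraseEdge E b a c :=
      fun a c h => h.1
    have hmono' : ∀ a c, eraseEdge (eraseEdge E b) e a c → eraseEdge E e a c :=
      fun a c h => ⟨h.1.1, h.2⟩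
    have ha' : Relation.ReflTransGen (eraseEdge (eraseEdge E b) e) s b.1 := by
      by_contra hc
      exact h1 (Relation.ReflTransGen.mono hmono _ _ (lemA ha hc))
    have hb2' : Relation.ReflTransGen (eraseEdge (eraseEdge E b) e) b.2 t := by
      by_contra hc
      exact h2 (Relation.ReflTransGen.mono hmono _ _ (lemB hb2 hc))
    exact heN (((Relation.ReflTransGen.mono hmono' _ _ ha').trans
      (Relation.ReflTransGen.single ⟨hbE, hnbe⟩)).trans (Relation.ReflTransGen.mono hmono' _ _ hb2'))
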